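/- Let K, K', E, E' : ℂ → ℂ be differentiable functions of k satisfying dK/dk = -K/k - E/((k²-1)k), dE/dk = -K/k + E/k, dK'/dk = kK'/(1-k²) + E'/((k²-1)k), dE'/dk = kK'/(1-k²) + kE'/(k²-1). Then the function K·E' + K'·E - K·K' has vanishing k-derivative (on the domain k ≠ 0, k² ≠ 1). -/

import Mathlib

open Complex

/-- The Legendre combination `KE' + K'E - KK'` is a first integral of the
closed system (28). -/
theorem legendre_integral (K K' E E' : ℂ → ℂ)
    (hK : Differentiable ℂ K) (hK' : Differentiable ℂ K')
    (hE : Differentiable ℂ E) (hE' : Differentiable ℂ E')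
    (hdK : ∀ k : ℂ, k ≠ 0 → k ^ 2 ≠ 1 →
      deriv K k = -K k / k - E k / ((k ^ 2 - 1) * k))
    (hdE : ∀ k : ℂ, k ≠ 0 → k ^ 2 ≠ 1 →
      deriv E k = -K k / k + E k / k)
    (hdK' : ∀ k : ℂ, k ≠ 0 → k ^ 2 ≠ 1 →
      deriv K' k = k * K' k / (1 - k ^ 2) + E' k / ((k ^ 2 - 1) * k))
    (hdE' : ∀ k : ℂ, k ≠ 0 → k ^ 2 ≠ 1 →
      deriv E' k = k * K' k / (1 - k ^ 2) + k * E' k / (k ^ 2 - 1)) :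
    ∀ k : ℂ, k ≠ 0 → k ^ 2 ≠ 1 →
      deriv (fun k => K k * E' k + K' k * E k - K k * K' k) k = 0 := by
  intro k hk hk2
  have h1 : k ^ 2 - 1 ≠ 0 := sub_ne_zero.mpr hk2
  have h2 : (1:ℂ) - k ^ 2 ≠ 0 := fun h => h1 (by linear_combination -h)
  have hA : deriv K k * ((k ^ 2 - 1) * k) = -K k * (k ^ 2 - 1) - E k := by
    rw [hdK k hk hk2]; field_simp
  have hB : deriv E k * k = -K k + E k := by
    rw [hdE k hk hk2]; field_simp
  have hC : deriv K' k * ((k ^ 2 - 1) * k) = -(k ^ 2 * K' k) + E' k := by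
    rw [hdK' k hk hk2]; field_simp; ring
  have hD : deriv E' k * (k ^ 2 - 1) = -(k * K' k) + k * E' k := by
    rw [hdE' k hk hk2]; field_simp; ring
  have hmul : deriv (fun k => K k * E' k + K' k * E k - K k * K' k) k
      * ((k ^ 2 - 1) * k) = 0 := by
    rw [deriv_fun_sub (((hK k).fun_mul (hE' k)).fun_add ((hK' k).fun_mul (hE k))) ((hK k).fun_mul (hK' k)),
      deriv_fun_add ((hK k).fun_mul (hE' k)) ((hK' k).fun_mul (hE k)),
      deriv_fun_mul (hK k) (hE' k), deriv_fun_mul (hK' k) (hE k), deriv_fun_mul (hK k) (hK' k)]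
    linear_combination (E' k - K' k) * hA + ((k ^ 2 - 1) * K' k) * hB +
      (E k - K k) * hC + (k * K k) * hD
  rcases mul_eq_zero.mp hmul with h | h
  · exact h
  · exact absurd h (mul_ne_zero h1 hk)
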